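/- (Parameter-space deviation bound for the EMA teacher.) Let E be a real normed vector space, α ∈ (0,1), θ : ℕ → E with θref := θ 0, and define the EMA sequence θ' : ℕ → E by θ' 0 = θref and θ' k = (1 − α) • θ' (k−1) + α • θ k. Suppose there is R ≥ 0 with ‖θ i − θref‖ ≤ R for all 1 ≤ i ≤ k. Then ‖θ' k − θref‖ ≤ R * (1 − (1 − α)^k), and hence ‖θ' k − θref‖² ≤ R² * (1 − (1 − α)^k)². -/

import Mathlib

/-- Parameter-space deviation bound for the EMA teacher: if `‖θ i − θref‖ ≤ R` for all
`1 ≤ i ≤ k`, then `‖θ' k − θref‖ ≤ R * (1 − (1−α)^k)` and hence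
`‖θ' k − θref‖² ≤ R² * (1 − (1−α)^k)²`. -/
theorem ema_deviation_bound
    {E : Type*} [NormedAddCommGroup E] [NormedSpace ℝ E]
    (α : ℝ) (hα : α ∈ Set.Ioo (0 : ℝ) 1)
    (θ θ' : ℕ → E) (h0 : θ' 0 = θ 0)
    (hrec : ∀ k : ℕ, 1 ≤ k → θ' k = (1 - α) • θ' (k - 1) + α • θ k)
    (k : ℕ) (R : ℝ) (hR : 0 ≤ R)
    (hbound : ∀ i : ℕ, 1 ≤ i → i ≤ k → ‖θ i - θ 0‖ ≤ R) :
    ‖θ' k - θ 0‖ ≤ R * (1 - (1 - α) ^ k) ∧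
      ‖θ' k - θ 0‖ ^ 2 ≤ R ^ 2 * (1 - (1 - α) ^ k) ^ 2 := by
  obtain ⟨hα0, hα1⟩ := hα
  have key : ‖θ' k - θ 0‖ ≤ R * (1 - (1 - α) ^ k) := by
    induction k with
    | zero => simp [h0]
    | succ n ih =>
      have hb : ∀ i : ℕ, 1 ≤ i → i ≤ n → ‖θ i - θ 0‖ ≤ R := fun i h1 h2 =>
        hbound i h1 (h2.trans (Nat.le_succ n))
      have ihn := ih hb
      have hrecn := hrec (n + 1) (Nat.succ_le_succ (Nat.zero_le n))
      simp only [Nat.add_sub_cancel] at hrecn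
      have heq : θ' (n + 1) - θ 0 = (1 - α) • (θ' n - θ 0) + α • (θ (n + 1) - θ 0) := by
        rw [hrecn, smul_sub, smul_sub]
        module
      rw [heq]
      calc ‖(1 - α) • (θ' n - θ 0) + α • (θ (n + 1) - θ 0)‖
          ≤ ‖(1 - α) • (θ' n - θ 0)‖ + ‖α • (θ (n + 1) - θ 0)‖ := norm_add_le _ _
        _ = (1 - α) * ‖θ' n - θ 0‖ + α * ‖θ (n + 1) - θ 0‖ := by
            rw [norm_smul, norm_smul, Real.norm_eq_abs, Real.norm_eq_abs,
              abs_of_nonneg (by linarith), abs_of_nonneg hα0.le]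
        _ ≤ (1 - α) * (R * (1 - (1 - α) ^ n)) + α * R := by
            gcongr
            · exact hbound (n + 1) (Nat.succ_le_succ (Nat.zero_le n)) le_rfl
        _ = R * (1 - (1 - α) ^ (n + 1)) := by ring
  refine ⟨key, ?_⟩
  have h1 : (0:ℝ) ≤ 1 - (1 - α) ^ k := by
    have : (1 - α) ^ k ≤ 1 := pow_le_one₀ (by linarith) (by linarith)
    linarith
  calc ‖θ' k - θ 0‖ ^ 2 ≤ (R * (1 - (1 - α) ^ k)) ^ 2 := by
        apply sq_le_sq' _ key; nlinarith [norm_nonneg (θ' k - θ 0)]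
    _ = R ^ 2 * (1 - (1 - α) ^ k) ^ 2 := by ring
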